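/- If P is the uniform distribution on Y^X, i.e. P(f) = |Y|^{-n} for every f, then for every optimiser a and every result vector R ∈ Y^n one has P_a(R) = |Y|^{-n}; consequently all optimisers have the same expected performance under every performance measure. -/

import Mathlib

namespace NFL

/-- A (deterministic) optimiser on search space `Fin n` and range `Y`:
it assigns to every trace (list of pairs with pairwise distinct first
components) of length `< n` a next, unvisited search point. -/
structure Optimiser (n : ℕ) (Y : Type*) where
  next : List (Fin n × Y) → Fin n
  valid : ∀ T : List (Fin n × Y), T.length < n → (T.map Prod.fst).Nodup →
    next T ∉ T.map Prod.fst

variable {n : ℕ} {Y : Type*}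

/-- The trace generated after `k` steps by running optimiser `a`
on target function `f`, starting from the empty trace. -/
def runFrom (a : Optimiser n Y) (f : Fin n → Y) : ℕ → List (Fin n × Y)
  | 0 => []
  | k + 1 =>
      runFrom a f k ++ [(a.next (runFrom a f k), f (a.next (runFrom a f k)))]

/-- The result vector `T^y(a,f)`: its `i`-th entry (0-indexed) is the value
observed at step `i+1`, i.e. `f` applied to the point probed after `i` steps. -/
def resVec (a : Optimiser n Y) (f : Fin n → Y) (i : Fin n) : Y :=
  f (a.next (runFrom a f (i : ℕ)))

/-- A problem distribution: a probability distribution on `Y^X`. -/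
def IsProbDist [Fintype Y] (P : (Fin n → Y) → ℝ) : Prop :=
  (∀ f, 0 ≤ P f) ∧ ∑ f, P f = 1

/-- `P_a(R)`: the probability that optimiser `a` produces result vector `R`. -/
def resProb [Fintype Y] [DecidableEq Y] (P : (Fin n → Y) → ℝ)
    (a : Optimiser n Y) (R : Fin n → Y) : ℝ :=
  ∑ f ∈ Finset.univ.filter (fun f => resVec a f = R), P f

/-- Expected performance `M^P(a)` of optimiser `a` under distribution `P`
and performance measure `M`. -/
def perf [Fintype Y] (P : (Fin n → Y) → ℝ) (M : (Fin n → Y) → ℝ)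
    (a : Optimiser n Y) : ℝ :=
  ∑ f, P f * M (resVec a f)

/-- NFL holds for `P`: all optimisers have the same expected performance
under every (nonnegative) performance measure. -/
def NFLholds [Fintype Y] (P : (Fin n → Y) → ℝ) : Prop :=
  ∀ M : (Fin n → Y) → ℝ, (∀ R, 0 ≤ M R) →
    ∀ a b : Optimiser n Y, perf P M a = perf P M b

/-- The histogram of `f`: `h_f(y) = |f⁻¹(y)|`. -/
def histogram [DecidableEq Y] (f : Fin n → Y) (y : Y) : ℕ :=
  (Finset.univ.filter fun x => f x = y).card

/-- `P` is block uniform: functions with equal histograms get equal probability. -/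
def BlockUniform [DecidableEq Y] (P : (Fin n → Y) → ℝ) : Prop :=
  ∀ f g : Fin n → Y, histogram f = histogram g → P f = P g

/-- `F` is closed under permutation: `f ∈ F` implies `σf ∈ F`,
where `(σf)(x) = f(σ⁻¹(x))`. -/
def Cup [Fintype Y] [DecidableEq Y] (F : Finset (Fin n → Y)) : Prop :=
  ∀ f ∈ F, ∀ σ : Equiv.Perm (Fin n), (f ∘ σ.symm) ∈ F

/-- The uniform distribution on a class `F`. -/
noncomputable def uniformOn [Fintype Y] [DecidableEq Y] (F : Finset (Fin n → Y))
    (f : Fin n → Y) : ℝ :=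
  if f ∈ F then 1 / F.card else 0

/-- An optimiser is non-adaptive if it probes the points of `X` in a fixed
order, regardless of the observed values. -/
def NonAdaptive (a : Optimiser n Y) : Prop :=
  ∃ ord : Fin n → Fin n,
    ∀ (f : Fin n → Y) (i : Fin n), a.next (runFrom a f (i : ℕ)) = ord i

/-- Optimisation time `M_ptm(R)`: the least index `i` (counting from 1) with
`R[i] = yMax`, with the convention `M_ptm(R) = n` if no such index exists. -/
def mptm [DecidableEq Y] (yMax : Y) (R : Fin n → Y) : ℕ :=
  if h : ∃ i, R i = yMax then
    ((Finset.univ.filter fun i => R i = yMax).min'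
      ⟨h.choose, Finset.mem_filter.mpr ⟨Finset.mem_univ _, h.choose_spec⟩⟩).val + 1
  else n

lemma runFrom_length (a : Optimiser n Y) (f : Fin n → Y) (k : ℕ) :
    (runFrom a f k).length = k := by
  induction k with
  | zero => rfl
  | succ k ih => simp [runFrom, ih]

lemma runFrom_mem (a : Optimiser n Y) (f : Fin n → Y) (k : ℕ) :
    ∀ p ∈ runFrom a f k, p.2 = f p.1 := by
  induction k with
  | zero => intro p hp; simp [runFrom] at hp
  | succ k ih =>
    intro p hp
    simp only [runFrom, List.mem_append, List.mem_singleton] at hp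
    rcases hp with hp | hp
    · exact ih p hp
    · subst hp; rfl

lemma runFrom_nodup (a : Optimiser n Y) (f : Fin n → Y) (k : ℕ) (hk : k ≤ n) :
    ((runFrom a f k).map Prod.fst).Nodup := by
  induction k with
  | zero => simp [runFrom]
  | succ k ih =>
    have hk' : k < n := lt_of_lt_of_le (Nat.lt_succ_self k) hk
    have ihk := ih (le_of_lt hk')
    have hv := a.valid (runFrom a f k) (by rw [runFrom_length]; exact hk') ihk
    simp only [runFrom, List.map_append, List.map_cons, List.map_nil]
    rw [List.nodup_append]
    refine ⟨ihk, List.nodup_singleton _, ?_⟩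
    intro x hx y hy
    rw [List.mem_singleton] at hy
    subst hy
    rintro rfl
    exact hv hx

lemma resVec_injective (a : Optimiser n Y) :
    Function.Injective (resVec a) := by
  intro f g hfg
  have hrun : ∀ k, k ≤ n → runFrom a f k = runFrom a g k := by
    intro k
    induction k with
    | zero => intro _; rfl
    | succ k ih =>
      intro hk
      have hk' : k < n := lt_of_lt_of_le (Nat.lt_succ_self k) hk
      have h := ih (le_of_lt hk')
      have hval : f (a.next (runFrom a f k)) = g (a.next (runFrom a g k)) := by
        have := congrFun hfg ⟨k, hk'⟩
        simpa [resVec] using this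
      simp [runFrom, h, ← hval]
  funext x
  -- every point appears in the full trace
  have hx : x ∈ (runFrom a f n).map Prod.fst := by
    have hnd := runFrom_nodup a f n le_rfl
    have hlen : ((runFrom a f n).map Prod.fst).length = n := by
      rw [List.length_map, runFrom_length]
    have : ((runFrom a f n).map Prod.fst).toFinset = Finset.univ := by
      apply Finset.eq_univ_of_card
      rw [List.toFinset_card_of_nodup hnd, hlen, Fintype.card_fin]
    rw [← List.mem_toFinset, this]
    exact Finset.mem_univ x
  obtain ⟨p, hp, hpx⟩ := List.mem_map.mp hx
  have h1 : p.2 = f p.1 := runFrom_mem a f n p hp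
  have h2 : p.2 = g p.1 := runFrom_mem a g n p (by rwa [← hrun n le_rfl])
  rw [← hpx, ← h1, h2]

lemma resVec_bijective (a : Optimiser n Y) [Fintype Y] [DecidableEq Y] :
    Function.Bijective (resVec a) :=
  (Finite.injective_iff_bijective).mp (resVec_injective a)

theorem uniform_nfl {n : ℕ} {Y : Type*} [Fintype Y] [DecidableEq Y]
    (hn : 1 ≤ n) (hY : 2 ≤ Fintype.card Y)
    (P : (Fin n → Y) → ℝ) (hP : IsProbDist P)
    (hunif : ∀ f : Fin n → Y, P f = 1 / (Fintype.card Y : ℝ) ^ n) :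
    (∀ (a : Optimiser n Y) (R : Fin n → Y),
        resProb P a R = 1 / (Fintype.card Y : ℝ) ^ n) ∧
      ∀ M : (Fin n → Y) → ℝ, (∀ R, 0 ≤ M R) →
        ∀ a b : Optimiser n Y, perf P M a = perf P M b := by
  constructor
  · intro a R
    obtain ⟨f0, hf0⟩ := (resVec_bijective a).surjective R
    have hfil : Finset.univ.filter (fun f => resVec a f = R) = {f0} := by
      ext f
      simp only [Finset.mem_filter, Finset.mem_univ, true_and, Finset.mem_singleton]
      constructor
      · intro h; exact (resVec_bijective a).injective (h.trans hf0.symm)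
      · intro h; subst h; exact hf0
    rw [resProb, hfil, Finset.sum_singleton, hunif]
  · intro M _ a b
    have key : ∀ c : Optimiser n Y,
        perf P M c = (1 / (Fintype.card Y : ℝ) ^ n) * ∑ R, M R := by
      intro c
      rw [perf]
      have := Fintype.sum_bijective (resVec c) (resVec_bijective c)
        (fun f => M (resVec c f)) M (fun _ => rfl)
      simp only [hunif]
      rw [← Finset.mul_sum, ← this]
    rw [key a, key b]

end NFL
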